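/- State concavity of observational entropy: for a POVM {Π_i}, probabilities λ_k > 0 with ∑_k λ_k = 1, and density matrices ρ_k, one has ∑_k λ_k S_C(ρ_k) ≤ S_C(∑_k λ_k ρ_k), where S_C(ρ) = -∑_i Tr[Π_i ρ] ln(Tr[Π_i ρ]/Tr[Π_i]). Equality holds iff Tr[Π_i ρ_k] = Tr[Π_i ρ_{k'}] for all i, k, k'. -/

import Mathlib

open Matrix BigOperators ComplexOrder

lemma aux_trace_mul_psd_nonneg {d : ℕ} {P Q : Matrix (Fin d) (Fin d) ℂ}
    (hP : P.PosSemidef) (hQ : Q.PosSemidef) : 0 ≤ (P * Q).trace.re := by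
  obtain ⟨B, hB⟩ : ∃ B : Matrix (Fin d) (Fin d) ℂ, P = Bᴴ * B := by
    open scoped MatrixOrder in
    obtain ⟨a, ha⟩ := CStarAlgebra.nonneg_iff_eq_star_mul_self.mp hP.nonneg
    exact ⟨a, ha⟩
  have h1 : (P * Q).trace = (B * Q * Bᴴ).trace := by
    rw [hB, Matrix.mul_assoc, Matrix.trace_mul_comm, Matrix.mul_assoc]
  have h2 : (B * Q * Bᴴ).PosSemidef := hQ.mul_mul_conjTranspose_same B
  rw [h1, Matrix.trace]
  rw [Complex.re_sum]
  refine Finset.sum_nonneg fun j _ => ?_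
  have := h2.dotProduct_mulVec_nonneg (Pi.single j 1)
  have hd : (0:ℂ) ≤ (B * Q * Bᴴ) j j := by
    simpa [dotProduct, Matrix.mulVec, Pi.single_apply, Finset.sum_ite_eq] using this
  exact (Complex.nonneg_iff.mp hd).1

lemma aux_key_id (V : ℝ) (hV : 0 < V) (x : ℝ) (hx : 0 ≤ x) :
    -(x * Real.log (x / V)) = Real.negMulLog x + x * Real.log V := by
  rcases hx.eq_or_lt with h | h
  · simp [← h, Real.negMulLog]
  · rw [Real.log_div h.ne' hV.ne', Real.negMulLog]; ring

lemma aux_jensen_i {κ : Type*} [Fintype κ] (lam : κ → ℝ) (hlam : ∀ k, 0 < lam k)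
    (hlamsum : ∑ k, lam k = 1) (x : κ → ℝ) (hx : ∀ k, 0 ≤ x k) (V : ℝ) (hV : 0 < V) :
    (∑ k, lam k * (-(x k * Real.log (x k / V))) ≤
      -((∑ k, lam k * x k) * Real.log ((∑ k, lam k * x k) / V)))
    ∧ ((∑ k, lam k * (-(x k * Real.log (x k / V))) =
      -((∑ k, lam k * x k) * Real.log ((∑ k, lam k * x k) / V)))
      ↔ ∀ k, x k = ∑ k', lam k' * x k') := by
  have hq : 0 ≤ ∑ k, lam k * x k :=
    Finset.sum_nonneg fun k _ => mul_nonneg (hlam k).le (hx k)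
  have hL : ∑ k, lam k * (-(x k * Real.log (x k / V))) =
      (∑ k, lam k * Real.negMulLog (x k)) + (∑ k, lam k * x k) * Real.log V := by
    rw [Finset.sum_mul]
    rw [← Finset.sum_add_distrib]
    congr 1; ext k
    rw [aux_key_id V hV (x k) (hx k)]; ring
  have hR : -((∑ k, lam k * x k) * Real.log ((∑ k, lam k * x k) / V)) =
      Real.negMulLog (∑ k, lam k * x k) + (∑ k, lam k * x k) * Real.log V :=
    aux_key_id V hV _ hq
  have hmem : ∀ k ∈ Finset.univ, x k ∈ Set.Ici (0:ℝ) := fun k _ => hx k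
  have hjen : ∑ k, lam k • Real.negMulLog (x k) ≤ Real.negMulLog (∑ k, lam k • x k) :=
    Real.concaveOn_negMulLog.le_map_sum (fun k _ => (hlam k).le) hlamsum hmem
  have heq := Real.strictConcaveOn_negMulLog.map_sum_eq_iff
    (t := Finset.univ) (w := lam) (p := x) (fun k _ => hlam k) hlamsum hmem
  simp only [smul_eq_mul] at hjen heq
  constructor
  · rw [hL, hR]; linarith
  · rw [hL, hR, add_left_inj]
    constructor
    · intro h; exact fun k => (heq.mp h.symm) k (Finset.mem_univ k)
    · intro h; exact (heq.mpr (fun j _ => h j)).symm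

lemma aux_trace_lin {d : ℕ} {κ : Type*} [Fintype κ] (P : Matrix (Fin d) (Fin d) ℂ)
    (lam : κ → ℝ) (ρ : κ → Matrix (Fin d) (Fin d) ℂ) :
    (P * ∑ k, (lam k : ℂ) • ρ k).trace.re = ∑ k, lam k * (P * ρ k).trace.re := by
  rw [Finset.mul_sum]
  simp [Matrix.mul_smul, Matrix.trace_smul, Complex.re_sum, smul_eq_mul,
    Complex.re_ofReal_mul]

/-- state concavity of observational entropy, with equality iff all the
states `ρ k` are indistinguishable for the coarse-graining. -/
theorem obs_entropy_state_concavity {d : ℕ} {ι κ : Type*} [Fintype ι] [Fintype κ]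
    (P : ι → Matrix (Fin d) (Fin d) ℂ)
    (hP : ∀ i, (P i).PosSemidef) (hsum : ∑ i, P i = 1)
    (hV : ∀ i, 0 < (P i).trace.re)
    (lam : κ → ℝ) (hlam : ∀ k, 0 < lam k) (hlamsum : ∑ k, lam k = 1)
    (ρ : κ → Matrix (Fin d) (Fin d) ℂ)
    (hρ : ∀ k, (ρ k).PosSemidef) (hρtr : ∀ k, (ρ k).trace = 1) :
    (∑ k, lam k *
        (-∑ i, (P i * ρ k).trace.re * Real.log ((P i * ρ k).trace.re / (P i).trace.re))
      ≤ -∑ i, (P i * ∑ k, (lam k : ℂ) • ρ k).trace.re *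
          Real.log ((P i * ∑ k, (lam k : ℂ) • ρ k).trace.re / (P i).trace.re))
    ∧ ((∑ k, lam k *
          (-∑ i, (P i * ρ k).trace.re * Real.log ((P i * ρ k).trace.re / (P i).trace.re))
        = -∑ i, (P i * ∑ k, (lam k : ℂ) • ρ k).trace.re *
            Real.log ((P i * ∑ k, (lam k : ℂ) • ρ k).trace.re / (P i).trace.re))
      ↔ ∀ i k k', (P i * ρ k).trace.re = (P i * ρ k').trace.re) := by
  set x : ι → κ → ℝ := fun i k => (P i * ρ k).trace.re with hxdef
  have hx : ∀ i k, 0 ≤ x i k := fun i k => aux_trace_mul_psd_nonneg (hP i) (hρ k)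
  -- rewrite the mixed-state probabilities
  have hq : ∀ i, (P i * ∑ k, (lam k : ℂ) • ρ k).trace.re = ∑ k, lam k * x i k :=
    fun i => aux_trace_lin (P i) lam ρ
  -- rewrite LHS as a double sum with i outermost
  have hLHS : ∑ k, lam k *
      (-∑ i, x i k * Real.log (x i k / (P i).trace.re)) =
      ∑ i, ∑ k, lam k * (-(x i k * Real.log (x i k / (P i).trace.re))) := by
    rw [Finset.sum_comm]
    congr 1; ext k
    rw [← Finset.sum_neg_distrib, Finset.mul_sum]
  have hRHS : (-∑ i, (P i * ∑ k, (lam k : ℂ) • ρ k).trace.re *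
      Real.log ((P i * ∑ k, (lam k : ℂ) • ρ k).trace.re / (P i).trace.re)) =
      ∑ i, -((∑ k, lam k * x i k) * Real.log ((∑ k, lam k * x i k) / (P i).trace.re)) := by
    rw [← Finset.sum_neg_distrib]
    congr 1; ext i; rw [hq i]
  have hJ := fun i => aux_jensen_i lam hlam hlamsum (x i) (hx i) _ (hV i)
  have hle : ∀ i ∈ Finset.univ,
      ∑ k, lam k * (-(x i k * Real.log (x i k / (P i).trace.re))) ≤
      -((∑ k, lam k * x i k) * Real.log ((∑ k, lam k * x i k) / (P i).trace.re)) :=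
    fun i _ => (hJ i).1
  refine ⟨?_, ?_⟩
  · rw [hLHS, hRHS]
    exact Finset.sum_le_sum hle
  · rw [hLHS, hRHS, Finset.sum_eq_sum_iff_of_le hle]
    constructor
    · intro h i k k'
      have hi := (hJ i).2.mp (h i (Finset.mem_univ i))
      exact (hi k).trans (hi k').symm
    · intro h i _
      refine (hJ i).2.mpr fun k => ?_
      have : ∀ k', lam k' * x i k' = lam k' * x i k :=
        fun k' => congrArg (lam k' * ·) (h i k' k)
      rw [Finset.sum_congr rfl (fun k' _ => this k'), ← Finset.sum_mul, hlamsum, one_mul]
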